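/- The sequence (a_m)_{m∈ℕ}, where a_m := inf_{h∈(0,1)} f_{m+1}(h)/f_m(h), is increasing: a_m ≤ a_{m+1} for every m ∈ ℕ. -/
import Mathlib


/-- The polynomials `f_n : [0,1] → ℝ` defined by `f_0(h) = h(1-h)` and
`f_n(h) = (f_{n-1}(h^2) + f_{n-1}(1-(1-h)^2))/2`. -/
noncomputable def f : ℕ → ℝ → ℝ
  | 0, h => h * (1 - h)
  | n + 1, h => (f n (h ^ 2) + f n (1 - (1 - h) ^ 2)) / 2

/-- `a_m := inf_{h ∈ (0,1)} f_{m+1}(h) / f_m(h)`. -/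
noncomputable def a (m : ℕ) : ℝ :=
  sInf ((fun h => f (m + 1) h / f m h) '' Set.Ioo (0 : ℝ) 1)

lemma sq_mem {h : ℝ} (hh : h ∈ Set.Ioo (0 : ℝ) 1) : h ^ 2 ∈ Set.Ioo (0 : ℝ) 1 := by
  obtain ⟨h0, h1⟩ := hh
  constructor <;> nlinarith

lemma refl_mem {h : ℝ} (hh : h ∈ Set.Ioo (0 : ℝ) 1) :
    1 - (1 - h) ^ 2 ∈ Set.Ioo (0 : ℝ) 1 := by
  obtain ⟨h0, h1⟩ := hh
  constructor <;> nlinarith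

lemma f_pos : ∀ (n : ℕ) {h : ℝ}, h ∈ Set.Ioo (0 : ℝ) 1 → 0 < f n h := by
  intro n
  induction n with
  | zero =>
    intro h hh
    obtain ⟨h0, h1⟩ := hh
    simp only [f]
    nlinarith
  | succ n ih =>
    intro h hh
    simp only [f]
    have := ih (sq_mem hh)
    have := ih (refl_mem hh)
    linarith

lemma bdd (m : ℕ) : BddBelow ((fun h => f (m + 1) h / f m h) '' Set.Ioo (0 : ℝ) 1) := by
  refine ⟨0, ?_⟩
  rintro x ⟨h, hh, rfl⟩
  exact le_of_lt (div_pos (f_pos _ hh) (f_pos _ hh))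

/-- The sequence `(a_m)` is increasing: `a_m ≤ a_{m+1}` for every `m`. -/
theorem a_increasing (m : ℕ) : a m ≤ a (m + 1) := by
  apply le_csInf ((Set.nonempty_Ioo.2 one_pos).image _)
  rintro x ⟨h, hh, rfl⟩
  have m1 := sq_mem hh
  have m2 := refl_mem hh
  have p1 := f_pos m m1
  have p2 := f_pos m m2
  have q1 := f_pos (m + 1) m1
  have q2 := f_pos (m + 1) m2
  have k1 : a m ≤ f (m + 1) (h ^ 2) / f m (h ^ 2) :=
    csInf_le (bdd m) ⟨h ^ 2, m1, rfl⟩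
  have k2 : a m ≤ f (m + 1) (1 - (1 - h) ^ 2) / f m (1 - (1 - h) ^ 2) :=
    csInf_le (bdd m) ⟨1 - (1 - h) ^ 2, m2, rfl⟩
  have k1' : a m * f m (h ^ 2) ≤ f (m + 1) (h ^ 2) :=
    (le_div_iff₀ p1).1 k1
  have k2' : a m * f m (1 - (1 - h) ^ 2) ≤ f (m + 1) (1 - (1 - h) ^ 2) :=
    (le_div_iff₀ p2).1 k2
  show a m ≤ f (m + 1 + 1) h / f (m + 1) h
  have e1 : f (m + 1 + 1) h = (f (m + 1) (h ^ 2) + f (m + 1) (1 - (1 - h) ^ 2)) / 2 := rfl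
  have e2 : f (m + 1) h = (f m (h ^ 2) + f m (1 - (1 - h) ^ 2)) / 2 := rfl
  rw [e1, e2, le_div_iff₀ (by linarith)]
  linarith
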